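/- Let (G, ≤) be a lefthanded graph with labels p_v ∈ [0,1] satisfying Shearer's condition: 𝔮(S) ≥ 0 for all S ⊆ V and 𝔮(∅) > 0. Then there exists an assignment of numbers x_v ∈ [0,1] such that p_v = x_v · Π_{u ~ v, u ≤ v} (1 − x_u) for all v, and Π_{v ∈ V} (1 − x_v) = 𝔮(∅). -/

import Mathlib

open scoped Classical

/-- A tree order: whenever `w < u` and `w < v`, the elements `u` and `v` are comparable. -/
def TreeOrder (V : Type*) [PartialOrder V] : Prop :=
  ∀ w u v : V, w < u → w < v → (u ≤ v ∨ v ≤ u)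

/-- A lefthanded graph with respect to the partial order on `V`. -/
def Lefthanded {V : Type*} [PartialOrder V] (G : SimpleGraph V) : Prop :=
  TreeOrder V ∧
  (∀ u v : V, G.Adj u v → u ≤ v ∨ v ≤ u) ∧
  (∀ w u v : V, w < u → u < v → G.Adj v w → G.Adj v u)

/-- `D_v = {u : u < v}`. -/
noncomputable def Dset {V : Type*} [Fintype V] [PartialOrder V] (v : V) : Finset V :=
  Finset.univ.filter (fun u => u < v)

/-- `D̄_v = D_v ∪ {v}`. -/
noncomputable def Dbar {V : Type*} [Fintype V] [DecidableEq V] [PartialOrder V] (v : V) :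
    Finset V :=
  insert v (Dset v)

/-- `N_v = {u < v : u ~ v}`. -/
noncomputable def Nset {V : Type*} [Fintype V] [PartialOrder V] (G : SimpleGraph V) (v : V) :
    Finset V :=
  Finset.univ.filter (fun u => u < v ∧ G.Adj u v)

/-- `F_v = D_v \ N_v`. -/
noncomputable def Fset {V : Type*} [Fintype V] [DecidableEq V] [PartialOrder V]
    (G : SimpleGraph V) (v : V) : Finset V :=
  Dset v \ Nset G v

/-- `μ(U)`: the set of maximal elements of `U`. -/
noncomputable def maxElts {V : Type*} [PartialOrder V] (U : Finset V) : Finset V :=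
  U.filter (fun u => ∀ w ∈ U, ¬ u < w)

/-- `I` is an independent set of `G`. -/
def IndepSet {V : Type*} (G : SimpleGraph V) (I : Finset V) : Prop :=
  ∀ u ∈ I, ∀ w ∈ I, ¬ G.Adj u w

/-- `B(S) = Σ_{I ⊆ S, I independent} (−1)^{|I|} Π_{v∈I} p_v`. -/
noncomputable def Bfun {V : Type*} [Fintype V] (G : SimpleGraph V) (p : V → ℝ) (S : Finset V) :
    ℝ :=
  ∑ I ∈ S.powerset.filter (fun I => IndepSet G I), (-1 : ℝ) ^ I.card * ∏ v ∈ I, p v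

/-- `𝔮(S) = Σ_{I ⊇ S, I independent} (−1)^{|I|−|S|} Π_{v∈I} p_v`. -/
noncomputable def qfun {V : Type*} [Fintype V] (G : SimpleGraph V) (p : V → ℝ) (S : Finset V) :
    ℝ :=
  ∑ I ∈ Finset.univ.powerset.filter (fun I => IndepSet G I ∧ S ⊆ I),
    (-1 : ℝ) ^ (I.card - S.card) * ∏ v ∈ I, p v

/-- A down-closed set. -/
def DownClosed {V : Type*} [Fintype V] [PartialOrder V] (S : Finset V) : Prop :=
  ∀ s ∈ S, Dset s ⊆ S

set_option linter.unusedSectionVars false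
set_option maxHeartbeats 1000000

section Aux

variable {V : Type*} [Fintype V] [DecidableEq V] [PartialOrder V]

lemma indepSet_empty (G : SimpleGraph V) : IndepSet G ∅ := by
  intro u hu; simp at hu

lemma Bfun_empty (G : SimpleGraph V) (p : V → ℝ) : Bfun G p ∅ = 1 := by
  unfold Bfun
  rw [Finset.powerset_empty, Finset.filter_singleton, if_pos (indepSet_empty G)]
  simp

lemma Bfun_eq_sum_ite (G : SimpleGraph V) (p : V → ℝ) (S : Finset V) :
    Bfun G p S = ∑ I ∈ S.powerset,
      if IndepSet G I then (-1 : ℝ) ^ I.card * ∏ v ∈ I, p v else 0 :=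
  (Finset.sum_filter _ _)

lemma neg_one_pow_sub {a b : ℕ} (h : b ≤ a) : ((-1 : ℝ)) ^ (a - b) = (-1) ^ a * (-1) ^ b := by
  have h2 : a - b + 2 * b = a + b := by omega
  have : ((-1 : ℝ)) ^ (a + b) = (-1) ^ (a - b) * ((-1) ^ 2) ^ b := by
    rw [← pow_mul, ← pow_add, h2]
  simp only [neg_one_sq, one_pow, mul_one] at this
  rw [← this, pow_add]

end Aux

set_option linter.unusedSectionVars false

section Aux2

variable {V : Type*} [Fintype V] [DecidableEq V] [PartialOrder V]

lemma Bfun_del (G : SimpleGraph V) (p : V → ℝ) {v : V} {D F : Finset V}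
    (hvD : v ∉ D) (hFD : F ⊆ D)
    (hiff : ∀ I, I ⊆ D → IndepSet G I → (IndepSet G (insert v I) ↔ I ⊆ F))
    (hind : ∀ I, I ⊆ D → IndepSet G (insert v I) → IndepSet G I) :
    Bfun G p (insert v D) = Bfun G p D - p v * Bfun G p F := by
  rw [Bfun_eq_sum_ite, Finset.sum_powerset_insert hvD, ← Bfun_eq_sum_ite]
  have h2 : ∀ I ∈ D.powerset,
      (if IndepSet G (insert v I) then (-1 : ℝ) ^ (insert v I).card * ∏ w ∈ insert v I, p w else 0)
      = -(p v * (if IndepSet G I ∧ I ⊆ F then (-1 : ℝ) ^ I.card * ∏ w ∈ I, p w else 0)) := by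
    intro I hI
    rw [Finset.mem_powerset] at hI
    have hvI : v ∉ I := fun h => hvD (hI h)
    have hcond : IndepSet G (insert v I) ↔ (IndepSet G I ∧ I ⊆ F) := by
      constructor
      · intro h
        have hI' := hind I hI h
        exact ⟨hI', (hiff I hI hI').mp h⟩
      · rintro ⟨h1, h2⟩
        exact (hiff I hI h1).mpr h2
    rw [hcond, Finset.card_insert_of_notMem hvI, Finset.prod_insert hvI]
    by_cases h : IndepSet G I ∧ I ⊆ F
    · rw [if_pos h, if_pos h]; ring
    · rw [if_neg h, if_neg h]; ring
  rw [Finset.sum_congr rfl h2, Finset.sum_neg_distrib, ← Finset.mul_sum]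
  have h3 : ∑ I ∈ D.powerset, (if IndepSet G I ∧ I ⊆ F then (-1 : ℝ) ^ I.card * ∏ w ∈ I, p w else 0)
      = Bfun G p F := by
    rw [Bfun_eq_sum_ite]
    rw [← Finset.sum_subset (Finset.powerset_mono.mpr hFD)]
    · apply Finset.sum_congr rfl
      intro I hI
      rw [Finset.mem_powerset] at hI
      by_cases h : IndepSet G I
      · rw [if_pos ⟨h, hI⟩, if_pos h]
      · rw [if_neg (fun hc => h hc.1), if_neg h]
    · intro I hID hIF
      rw [Finset.mem_powerset] at hIF
      rw [if_neg (fun hc => hIF hc.2)]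
  rw [h3]; ring

end Aux2

section Aux3
variable {V : Type*} [Fintype V] [DecidableEq V] [PartialOrder V]

lemma Bfun_mul (G : SimpleGraph V) (p : V → ℝ) {A B : Finset V} (hAB : Disjoint A B)
    (hE : ∀ a ∈ A, ∀ b ∈ B, ¬ G.Adj a b) :
    Bfun G p (A ∪ B) = Bfun G p A * Bfun G p B := by
  unfold Bfun
  rw [Finset.sum_mul_sum]
  rw [← Finset.sum_product']
  symm
  apply Finset.sum_bij' (i := fun P _ => P.1 ∪ P.2) (j := fun I _ => (I ∩ A, I ∩ B))
  · rintro ⟨J, K⟩ hJK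
    simp only [Finset.mem_product, Finset.mem_filter, Finset.mem_powerset] at hJK
    obtain ⟨⟨hJA, hJi⟩, hKB, hKi⟩ := hJK
    simp only [Finset.mem_filter, Finset.mem_powerset]
    constructor
    · exact Finset.union_subset_union hJA hKB
    · intro u hu w hw
      rw [Finset.mem_union] at hu hw
      rcases hu with hu | hu <;> rcases hw with hw | hw
      · exact hJi u hu w hw
      · exact hE u (hJA hu) w (hKB hw)
      · exact fun h => hE w (hJA hw) u (hKB hu) h.symm
      · exact hKi u hu w hw
  · intro I hI
    simp only [Finset.mem_filter, Finset.mem_powerset] at hI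
    simp only [Finset.mem_product, Finset.mem_filter, Finset.mem_powerset]
    refine ⟨⟨Finset.inter_subset_right, ?_⟩, Finset.inter_subset_right, ?_⟩ <;>
      · intro u hu w hw
        rw [Finset.mem_inter] at hu hw
        exact hI.2 u hu.1 w hw.1
  · rintro ⟨J, K⟩ hJK
    simp only [Finset.mem_product, Finset.mem_filter, Finset.mem_powerset] at hJK
    obtain ⟨⟨hJA, _⟩, hKB, _⟩ := hJK
    have h1 : (J ∪ K) ∩ A = J := by
      rw [Finset.union_inter_distrib_right, Finset.inter_eq_left.mpr hJA,
        (Finset.disjoint_iff_inter_eq_empty.mp (hAB.symm.mono_left hKB)), Finset.union_empty]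
    have h2 : (J ∪ K) ∩ B = K := by
      rw [Finset.union_inter_distrib_right, Finset.inter_eq_left.mpr hKB,
        (Finset.disjoint_iff_inter_eq_empty.mp (hAB.mono_left hJA)), Finset.empty_union]
    simp [h1, h2]
  · intro I hI
    simp only [Finset.mem_filter, Finset.mem_powerset] at hI
    rw [← Finset.inter_union_distrib_left, Finset.inter_eq_left.mpr hI.1]
  · rintro ⟨J, K⟩ hJK
    simp only [Finset.mem_product, Finset.mem_filter, Finset.mem_powerset] at hJK
    obtain ⟨⟨hJA, _⟩, hKB, _⟩ := hJK
    have hd : Disjoint J K := hAB.mono hJA hKB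
    rw [Finset.card_union_of_disjoint hd, Finset.prod_union hd, pow_add]
    ring

lemma qfun_as_ite (G : SimpleGraph V) (p : V → ℝ) (S : Finset V) :
    qfun G p S = ∑ I ∈ Finset.univ.powerset.filter (fun I => IndepSet G I),
      if S ⊆ I then (-1 : ℝ) ^ (I.card - S.card) * ∏ v ∈ I, p v else 0 := by
  unfold qfun
  rw [Finset.sum_filter]
  rw [Finset.sum_filter]
  apply Finset.sum_congr rfl
  intro I _
  by_cases h1 : IndepSet G I <;> by_cases h2 : S ⊆ I <;> simp [h1, h2]

lemma sum_powerset_neg_one_real (T : Finset V) :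
    ∑ S ∈ T.powerset, ((-1 : ℝ)) ^ S.card = if T = ∅ then 1 else 0 := by
  have := Finset.sum_powerset_neg_one_pow_card (x := T)
  have h : ((∑ S ∈ T.powerset, ((-1 : ℤ)) ^ S.card : ℤ) : ℝ)
      = ∑ S ∈ T.powerset, ((-1 : ℝ)) ^ S.card := by push_cast; rfl
  rw [← h, this]
  split <;> norm_num

lemma Bfun_eq_sum_qfun (G : SimpleGraph V) (p : V → ℝ) (U : Finset V) :
    Bfun G p U = ∑ S ∈ Uᶜ.powerset, qfun G p S := by
  simp only [qfun_as_ite]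
  rw [Finset.sum_comm]
  have key : ∀ I ∈ Finset.univ.powerset.filter (fun I => IndepSet G I),
      (∑ S ∈ Uᶜ.powerset, if S ⊆ I then (-1 : ℝ) ^ (I.card - S.card) * ∏ v ∈ I, p v else 0)
      = if I ⊆ U then (-1 : ℝ) ^ I.card * ∏ v ∈ I, p v else 0 := by
    intro I _
    have h1 : ∀ S ∈ Uᶜ.powerset,
        (if S ⊆ I then (-1 : ℝ) ^ (I.card - S.card) * ∏ v ∈ I, p v else 0)
        = if S ∈ (Uᶜ ∩ I).powerset then (-1 : ℝ) ^ (I.card - S.card) * ∏ v ∈ I, p v else 0 := by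
      intro S hS
      rw [Finset.mem_powerset] at hS
      by_cases h : S ⊆ I
      · rw [if_pos h, if_pos (Finset.mem_powerset.mpr (Finset.subset_inter hS h))]
      · rw [if_neg h, if_neg (fun hc => h ((Finset.mem_powerset.mp hc).trans Finset.inter_subset_right))]
    rw [Finset.sum_congr rfl h1]
    rw [← Finset.sum_subset (Finset.powerset_mono.mpr (Finset.inter_subset_left : Uᶜ ∩ I ⊆ Uᶜ))
      (fun S _ hS => if_neg hS)]
    have h2 : ∀ S ∈ (Uᶜ ∩ I).powerset,
        (if S ∈ (Uᶜ ∩ I).powerset then (-1 : ℝ) ^ (I.card - S.card) * ∏ v ∈ I, p v else 0)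
        = ((-1 : ℝ) ^ I.card * ∏ v ∈ I, p v) * (-1 : ℝ) ^ S.card := by
      intro S hS
      rw [if_pos hS]
      rw [Finset.mem_powerset] at hS
      have hSI : S ⊆ I := hS.trans Finset.inter_subset_right
      rw [neg_one_pow_sub (Finset.card_le_card hSI)]
      ring
    rw [Finset.sum_congr rfl h2, ← Finset.mul_sum, sum_powerset_neg_one_real]
    have h3 : (Uᶜ ∩ I = ∅) ↔ I ⊆ U := by
      rw [Finset.eq_empty_iff_forall_notMem]
      simp only [Finset.mem_inter, Finset.mem_compl, not_and]
      constructor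
      · intro h x hx; by_contra hc; exact h x hc hx
      · intro h x hxU hxI; exact hxU (h hxI)
    by_cases h : I ⊆ U
    · rw [if_pos (h3.mpr h), if_pos h, mul_one]
    · rw [if_neg (fun hc => h (h3.mp hc)), if_neg h, mul_zero]
  rw [Finset.sum_congr rfl key]
  rw [← Finset.sum_filter]
  have h4 : (Finset.univ.powerset.filter (fun I => IndepSet G I)).filter (fun I => I ⊆ U)
      = U.powerset.filter (fun I => IndepSet G I) := by
    ext I
    simp only [Finset.mem_filter, Finset.mem_powerset, Finset.subset_univ, true_and]
    tauto
  rw [h4]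
  rfl

end Aux3

section Aux4
variable {V : Type*} [Fintype V] [DecidableEq V] [PartialOrder V]

lemma Bfun_pos (G : SimpleGraph V) (p : V → ℝ)
    (hq : ∀ S : Finset V, 0 ≤ qfun G p S) (hq0 : 0 < qfun G p ∅) (U : Finset V) :
    0 < Bfun G p U := by
  rw [Bfun_eq_sum_qfun]
  have h := Finset.single_le_sum (f := fun S => qfun G p S)
    (fun S _ => hq S) (Finset.empty_mem_powerset Uᶜ)
  linarith

lemma mem_Dset_iff {u v : V} : u ∈ Dset v ↔ u < v := by
  simp [Dset]

lemma mem_Dbar_iff {u v : V} : u ∈ Dbar v ↔ u ≤ v := by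
  simp only [Dbar, Finset.mem_insert, mem_Dset_iff]
  rw [le_iff_lt_or_eq]
  tauto

lemma mem_Nset_iff {G : SimpleGraph V} {u v : V} : u ∈ Nset G v ↔ u < v ∧ G.Adj u v := by
  simp [Nset]

lemma mem_Fset_iff {G : SimpleGraph V} {u v : V} :
    u ∈ Fset G v ↔ u < v ∧ ¬ G.Adj u v := by
  simp only [Fset, Finset.mem_sdiff, mem_Dset_iff, mem_Nset_iff]
  tauto

lemma downClosed_Dset (v : V) : DownClosed (Dset v) := by
  intro s hs u hu
  rw [mem_Dset_iff] at *
  exact hu.trans hs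

lemma downClosed_univ : DownClosed (Finset.univ : Finset V) :=
  fun _ _ _ _ => Finset.mem_univ _

lemma downClosed_Fset {G : SimpleGraph V} (hG : Lefthanded G) (v : V) :
    DownClosed (Fset G v) := by
  intro s hs u hu
  rw [mem_Fset_iff] at hs ⊢
  rw [mem_Dset_iff] at hu
  refine ⟨hu.trans hs.1, ?_⟩
  intro hadj
  exact hs.2 (hG.2.2 u s v hu hs.1 hadj.symm).symm

lemma noedge (G : SimpleGraph V) (hG : Lefthanded G) {U : Finset V} {m : V}
    (hmU : m ∈ U) (hmax : ∀ w ∈ U, ¬ m < w) :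
    ∀ a ∈ Dbar m, ∀ b ∈ U \ Dbar m, ¬ G.Adj a b := by
  intro a ha b hb hadj
  rw [Finset.mem_sdiff] at hb
  rw [mem_Dbar_iff] at ha
  have hbm : ¬ b ≤ m := fun h => hb.2 (mem_Dbar_iff.mpr h)
  rcases hG.2.1 a b hadj with h | h
  · have hab : a < b := lt_of_le_of_ne h hadj.ne
    rcases lt_or_eq_of_le ha with ha' | rfl
    · rcases hG.1 a b m hab ha' with h' | h'
      · exact hbm h'
      · have : m < b := lt_of_le_of_ne h' (fun he => hbm (he ▸ le_refl m))
        exact hmax b hb.1 this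
    · exact hmax b hb.1 hab
  · exact hbm (h.trans ha)

lemma lemT (G : SimpleGraph V) (p : V → ℝ) (hG : Lefthanded G)
    (hq : ∀ S : Finset V, 0 ≤ qfun G p S) (hq0 : 0 < qfun G p ∅) :
    ∀ U : Finset V, DownClosed U →
      Bfun G p U * ∏ v ∈ U, Bfun G p (Dset v) = ∏ v ∈ U, Bfun G p (Dbar v) := by
  intro U
  induction U using Finset.strongInduction with
  | _ U ih =>
    intro hU
    rcases U.eq_empty_or_nonempty with rfl | hne
    · simp [Bfun_empty]
    obtain ⟨m, hm⟩ := U.exists_maximal hne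
    have hmU : m ∈ U := hm.1
    have hmax : ∀ w ∈ U, ¬ m < w := fun w hw hlt => hlt.not_ge (hm.2 hw hlt.le)
    have hDbarU : Dbar m ⊆ U := by
      rw [Dbar]
      exact Finset.insert_subset hmU (hU m hmU)
    have hUsplit : U = Dbar m ∪ (U \ Dbar m) := (Finset.union_sdiff_of_subset hDbarU).symm
    have hdisj : Disjoint (Dbar m) (U \ Dbar m) := Finset.disjoint_sdiff
    have split1 : Bfun G p U = Bfun G p (Dbar m) * Bfun G p (U \ Dbar m) := by
      conv_lhs => rw [hUsplit]
      exact Bfun_mul G p hdisj (noedge G hG hmU hmax)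
    have hErase : U.erase m = Dset m ∪ (U \ Dbar m) := by
      ext u
      simp only [Finset.mem_erase, Finset.mem_union, Finset.mem_sdiff, mem_Dset_iff, mem_Dbar_iff]
      constructor
      · rintro ⟨hne', hu⟩
        by_cases h : u ≤ m
        · exact Or.inl (lt_of_le_of_ne h hne')
        · exact Or.inr ⟨hu, h⟩
      · rintro (h | ⟨hu, h⟩)
        · exact ⟨ne_of_lt h, hU m hmU (mem_Dset_iff.mpr h)⟩
        · exact ⟨fun he => h (he ▸ le_refl m), hu⟩
    have hdisj2 : Disjoint (Dset m) (U \ Dbar m) := by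
      apply hdisj.mono_left
      rw [Dbar]; exact Finset.subset_insert m _
    have split2 : Bfun G p (U.erase m) = Bfun G p (Dset m) * Bfun G p (U \ Dbar m) := by
      rw [hErase]
      apply Bfun_mul G p hdisj2
      intro a ha b hb
      exact noedge G hG hmU hmax a (by rw [Dbar]; exact Finset.mem_insert_of_mem ha) b hb
    have hUerase : DownClosed (U.erase m) := by
      intro s hs u hu
      rw [Finset.mem_erase] at hs ⊢
      refine ⟨?_, hU s hs.2 hu⟩
      rintro rfl
      exact hmax s hs.2 (mem_Dset_iff.mp hu)
    have hIH := ih (U.erase m) (Finset.erase_ssubset hmU) hUerase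
    rw [← Finset.mul_prod_erase U _ hmU, ← Finset.mul_prod_erase U
      (fun v => Bfun G p (Dbar v)) hmU, split1, ← hIH, split2]
    ring

end Aux4

section Aux5
variable {V : Type*} [Fintype V] [DecidableEq V] [PartialOrder V]

lemma Bfun_Dbar (G : SimpleGraph V) (p : V → ℝ) (v : V) :
    Bfun G p (Dbar v) = Bfun G p (Dset v) - p v * Bfun G p (Fset G v) := by
  rw [Dbar]
  apply Bfun_del G p (fun h => absurd (mem_Dset_iff.mp h) (lt_irrefl v)) Finset.sdiff_subset
  · intro I hID hI
    constructor
    · intro h u hu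
      show u ∈ Fset G v
      rw [mem_Fset_iff]
      refine ⟨mem_Dset_iff.mp (hID hu), ?_⟩
      intro hadj
      exact h u (Finset.mem_insert_of_mem hu) v (Finset.mem_insert_self v I) hadj
    · intro hIF u hu w hw hadj
      rw [Finset.mem_insert] at hu hw
      rcases hu with rfl | hu <;> rcases hw with rfl | hw
      · exact G.irrefl hadj
      · exact (mem_Fset_iff.mp (hIF hw)).2 hadj.symm
      · exact (mem_Fset_iff.mp (hIF hu)).2 hadj
      · exact hI u hu w hw hadj
  · intro I _ h u hu w hw
    exact h u (Finset.mem_insert_of_mem hu) w (Finset.mem_insert_of_mem hw)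

lemma star_id (G : SimpleGraph V) (p : V → ℝ) (hG : Lefthanded G)
    (hq : ∀ S : Finset V, 0 ≤ qfun G p S) (hq0 : 0 < qfun G p ∅) (v : V) :
    Bfun G p (Dset v) * ∏ u ∈ Nset G v, Bfun G p (Dset u)
      = Bfun G p (Fset G v) * ∏ u ∈ Nset G v, Bfun G p (Dbar u) := by
  have hND : Nset G v ⊆ Dset v := fun u hu => mem_Dset_iff.mpr (mem_Nset_iff.mp hu).1
  have hsplit : Dset v = Fset G v ∪ Nset G v := by
    rw [Fset, Finset.sdiff_union_of_subset hND]
  have hdisj : Disjoint (Fset G v) (Nset G v) := Finset.sdiff_disjoint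
  have h1 := lemT G p hG hq hq0 (Dset v) (downClosed_Dset v)
  have h2 := lemT G p hG hq hq0 (Fset G v) (downClosed_Fset hG v)
  rw [hsplit, Finset.prod_union hdisj, Finset.prod_union hdisj, ← hsplit] at h1
  have hne : ∏ u ∈ Fset G v, Bfun G p (Dset u) ≠ 0 :=
    (Finset.prod_pos (fun u _ => Bfun_pos G p hq hq0 _)).ne'
  apply mul_right_cancel₀ hne
  rw [← h2] at h1
  linear_combination h1

lemma qfun_empty_eq (G : SimpleGraph V) (p : V → ℝ) :
    qfun G p ∅ = Bfun G p Finset.univ := by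
  unfold qfun Bfun
  apply Finset.sum_congr
  · apply Finset.filter_congr
    intro I _
    simp
  · intro I _
    simp

end Aux5

theorem stmt10 {V : Type*} [Fintype V] [DecidableEq V] [PartialOrder V]
    (G : SimpleGraph V) (p : V → ℝ) (hp : ∀ v, 0 ≤ p v ∧ p v ≤ 1)
    (hG : Lefthanded G)
    (hq : ∀ S : Finset V, 0 ≤ qfun G p S) (hq0 : 0 < qfun G p ∅) :
    ∃ x : V → ℝ, (∀ v, 0 ≤ x v ∧ x v ≤ 1) ∧
      (∀ v, p v = x v *
        ∏ u ∈ Finset.univ.filter (fun u => G.Adj u v ∧ u ≤ v), (1 - x u)) ∧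
      ∏ v : V, (1 - x v) = qfun G p ∅ := by
  have hpos : ∀ U : Finset V, 0 < Bfun G p U := Bfun_pos G p hq hq0
  set x : V → ℝ := fun v => p v * Bfun G p (Fset G v) / Bfun G p (Dset v) with hxdef
  have hone : ∀ v, 1 - x v = Bfun G p (Dbar v) / Bfun G p (Dset v) := by
    intro v
    rw [Bfun_Dbar G p v, hxdef]
    have := (Bfun_pos G p hq hq0 (Dset v)).ne'
    field_simp
  refine ⟨x, ?_, ?_, ?_⟩
  · intro v
    constructor
    · exact div_nonneg (mul_nonneg (hp v).1 (hpos _).le) (hpos _).le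
    · have h1 : 0 ≤ 1 - x v := by
        rw [hone v]
        exact div_nonneg (hpos _).le (hpos _).le
      linarith
  · intro v
    have hNeq : Finset.univ.filter (fun u => G.Adj u v ∧ u ≤ v) = Nset G v := by
      ext u
      simp only [Finset.mem_filter, Finset.mem_univ, true_and, mem_Nset_iff]
      constructor
      · rintro ⟨hadj, hle⟩
        exact ⟨lt_of_le_of_ne hle hadj.ne, hadj⟩
      · rintro ⟨hlt, hadj⟩
        exact ⟨hadj, hlt.le⟩
    rw [hNeq]
    have hprod : ∏ u ∈ Nset G v, (1 - x u)
        = (∏ u ∈ Nset G v, Bfun G p (Dbar u)) / (∏ u ∈ Nset G v, Bfun G p (Dset u)) := by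
      rw [← Finset.prod_div_distrib]
      exact Finset.prod_congr rfl (fun u _ => hone u)
    rw [hprod, hxdef]
    have hstar := star_id G p hG hq hq0 v
    have hne1 : Bfun G p (Dset v) ≠ 0 := (hpos _).ne'
    have hne2 : ∏ u ∈ Nset G v, Bfun G p (Dset u) ≠ 0 :=
      (Finset.prod_pos (fun u _ => hpos _)).ne'
    field_simp
    linear_combination p v * hstar
  · have hT := lemT G p hG hq hq0 Finset.univ downClosed_univ
    have hprod : ∏ v : V, (1 - x v)
        = (∏ v : V, Bfun G p (Dbar v)) / (∏ v : V, Bfun G p (Dset v)) := by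
      rw [← Finset.prod_div_distrib]
      exact Finset.prod_congr rfl (fun u _ => hone u)
    rw [hprod, qfun_empty_eq, ← hT]
    rw [mul_div_assoc, div_self (Finset.prod_pos (fun u _ => hpos _)).ne', mul_one]
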